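/- Let p be a prime and for each a ∈ {1,...,p−1} and x ∈ {0,...,p−1} define d_a(x) = (a·x mod p) + 2p·(a·x² mod p). Then for any a ≠ b in {1,...,p−1} and any integer t, the equation d_a(x) − d_b(y) = t has at most two solutions (x,y) ∈ {0,...,p−1}². -/

import Mathlib

/-- The function `d_a(x) = (a·x mod p) + 2p·(a·x² mod p)`. -/
def dval (p a x : ℕ) : ℕ := a * x % p + 2 * p * (a * x ^ 2 % p)

/-- For a prime `p`, distinct `a ≠ b` in `{1,...,p-1}` and any
integer `t`, the equation `d_a(x) - d_b(y) = t` has at most two solutions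
`(x,y) ∈ {0,...,p-1}²`. -/
theorem stmt6 (p : ℕ) (hp : p.Prime) (a b : ℕ)
    (ha : 1 ≤ a ∧ a ≤ p - 1) (hb : 1 ≤ b ∧ b ≤ p - 1) (hab : a ≠ b) (t : ℤ) :
    (((Finset.range p) ×ˢ (Finset.range p)).filter
      (fun xy => (dval p a xy.1 : ℤ) - (dval p b xy.2 : ℤ) = t)).card ≤ 2 := by
  classical
  haveI := Fact.mk hp
  have hp0 : 0 < p := hp.pos
  set S := (((Finset.range p) ×ˢ (Finset.range p)).filter
      (fun xy => (dval p a xy.1 : ℤ) - (dval p b xy.2 : ℤ) = t)) with hSdef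
  rcases S.eq_empty_or_nonempty with hemp | ⟨⟨x₀, y₀⟩, h₀⟩
  · simp [hemp]
  have hap : a < p := by omega
  have hbp : b < p := by omega
  have ha0 : (a : ZMod p) ≠ 0 := by
    rw [Ne, ZMod.natCast_eq_zero_iff]
    intro hdvd
    have := Nat.le_of_dvd (by omega) hdvd
    omega
  have hb0 : (b : ZMod p) ≠ 0 := by
    rw [Ne, ZMod.natCast_eq_zero_iff]
    intro hdvd
    have := Nat.le_of_dvd (by omega) hdvd
    omega
  have hba : (b : ZMod p) - a ≠ 0 := by
    intro h
    have h2 : (b : ZMod p) = a := by linear_combination h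
    have : b = a := by
      have hb' := ZMod.val_cast_of_lt hbp
      have ha' := ZMod.val_cast_of_lt hap
      rw [← hb', ← ha', h2]
    exact hab this.symm
  -- extract data of the base solution
  have hmemS : ∀ x y : ℕ, (x, y) ∈ S →
      x < p ∧ y < p ∧ (dval p a x : ℤ) - (dval p b y : ℤ) = t := by
    intro x y h
    rw [hSdef, Finset.mem_filter, Finset.mem_product, Finset.mem_range,
      Finset.mem_range] at h
    exact ⟨h.1.1, h.1.2, h.2⟩
  set c : ZMod p := (a : ZMod p) * x₀ - b * y₀ with hc
  set d : ZMod p := (a : ZMod p) * x₀ ^ 2 - b * y₀ ^ 2 with hd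
  -- every solution satisfies the two congruences
  have key : ∀ x y : ℕ, (x, y) ∈ S →
      (a : ZMod p) * x - b * y = c ∧ (a : ZMod p) * x ^ 2 - b * y ^ 2 = d := by
    intro x y h
    obtain ⟨hx, hy, heq⟩ := hmemS x y h
    obtain ⟨hx₀, hy₀, heq₀⟩ := hmemS x₀ y₀ h₀
    have e : ((a * x % p : ℕ) : ℤ) + 2 * p * ((a * x ^ 2 % p : ℕ) : ℤ)
        - (((b * y % p : ℕ) : ℤ) + 2 * p * ((b * y ^ 2 % p : ℕ) : ℤ))
        = ((a * x₀ % p : ℕ) : ℤ) + 2 * p * ((a * x₀ ^ 2 % p : ℕ) : ℤ)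
        - (((b * y₀ % p : ℕ) : ℤ) + 2 * p * ((b * y₀ ^ 2 % p : ℕ) : ℤ)) := by
      have := heq.trans heq₀.symm
      simpa [dval] using this
    have b1 : (a * x % p : ℕ) < p := Nat.mod_lt _ hp0
    have b2 : (b * y % p : ℕ) < p := Nat.mod_lt _ hp0
    have b3 : (a * x₀ % p : ℕ) < p := Nat.mod_lt _ hp0
    have b4 : (b * y₀ % p : ℕ) < p := Nat.mod_lt _ hp0
    have b5 : (a * x ^ 2 % p : ℕ) < p := Nat.mod_lt _ hp0
    have b6 : (b * y ^ 2 % p : ℕ) < p := Nat.mod_lt _ hp0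
    have b7 : (a * x₀ ^ 2 % p : ℕ) < p := Nat.mod_lt _ hp0
    have b8 : (b * y₀ ^ 2 % p : ℕ) < p := Nat.mod_lt _ hp0
    set m : ℤ := ((a * x % p : ℕ) : ℤ) - ((b * y % p : ℕ) : ℤ)
        - (((a * x₀ % p : ℕ) : ℤ) - ((b * y₀ % p : ℕ) : ℤ)) with hm
    have hdvd : (2 * (p : ℤ)) ∣ m := by
      refine ⟨((a * x₀ ^ 2 % p : ℕ) : ℤ) - ((b * y₀ ^ 2 % p : ℕ) : ℤ)
        - (((a * x ^ 2 % p : ℕ) : ℤ) - ((b * y ^ 2 % p : ℕ) : ℤ)), ?_⟩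
      rw [hm]; linarith [e]
    have habs : |m| < 2 * (p : ℤ) := by
      rw [abs_lt]
      constructor <;> · rw [hm]; omega
    have hm0 : m = 0 := Int.eq_zero_of_abs_lt_dvd hdvd habs
    have hm2 : ((a * x₀ ^ 2 % p : ℕ) : ℤ) - ((b * y₀ ^ 2 % p : ℕ) : ℤ)
        = ((a * x ^ 2 % p : ℕ) : ℤ) - ((b * y ^ 2 % p : ℕ) : ℤ) := by
      have hp0' : (0:ℤ) < 2 * p := by positivity
      have : 2 * (p:ℤ) * (((a * x₀ ^ 2 % p : ℕ) : ℤ) - ((b * y₀ ^ 2 % p : ℕ) : ℤ)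
          - (((a * x ^ 2 % p : ℕ) : ℤ) - ((b * y ^ 2 % p : ℕ) : ℤ))) = 0 := by
        rw [hm] at hm0; linarith [e]
      have := mul_eq_zero.mp this
      rcases this with h' | h'
      · exfalso; omega
      · linarith
    -- first congruence
    rw [hm] at hm0
    have hn1 : (a * x % p) + (b * y₀ % p) = (a * x₀ % p) + (b * y % p) := by
      omega
    have hn2 : (a * x₀ ^ 2 % p) + (b * y ^ 2 % p) = (a * x ^ 2 % p) + (b * y₀ ^ 2 % p) := by
      omega
    have hz1 := congrArg (fun n : ℕ => (n : ZMod p)) hn1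
    have hz2 := congrArg (fun n : ℕ => (n : ZMod p)) hn2
    simp only [Nat.cast_add, ZMod.natCast_mod, Nat.cast_mul, Nat.cast_pow] at hz1 hz2
    constructor
    · rw [hc]; linear_combination hz1
    · rw [hd]; linear_combination -hz2
  -- the quadratic polynomial
  set q : Polynomial (ZMod p) :=
    Polynomial.C ((a : ZMod p) * (b - a)) * Polynomial.X ^ 2
      + Polynomial.C (2 * a * c) * Polynomial.X + Polynomial.C (-(c ^ 2 + b * d)) with hq
  have hlead : (a : ZMod p) * ((b : ZMod p) - a) ≠ 0 := mul_ne_zero ha0 hba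
  have hdeg : q.natDegree = 2 := Polynomial.natDegree_quadratic hlead
  have hqne : q ≠ 0 := by
    intro h
    rw [h] at hdeg
    simp at hdeg
  have hroot : ∀ x y : ℕ, (x, y) ∈ S → q.eval (x : ZMod p) = 0 := by
    intro x y h
    obtain ⟨h1, h2⟩ := key x y h
    rw [hq]
    simp only [Polynomial.eval_add, Polynomial.eval_mul, Polynomial.eval_C,
      Polynomial.eval_pow, Polynomial.eval_X]
    linear_combination (b : ZMod p) * h2 - ((b : ZMod p) * y + (a : ZMod p) * x - c) * h1
  have hinj : ∀ xy ∈ S, ∀ xy' ∈ S,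
      ((xy.1 : ZMod p) = (xy'.1 : ZMod p)) → xy = xy' := by
    rintro ⟨x, y⟩ h ⟨x', y'⟩ h' hxx
    obtain ⟨hx, hy, -⟩ := hmemS x y h
    obtain ⟨hx', hy', -⟩ := hmemS x' y' h'
    have hxeq : x = x' := by
      have := ZMod.val_cast_of_lt hx
      have := ZMod.val_cast_of_lt hx'
      rw [← ZMod.val_cast_of_lt hx, ← ZMod.val_cast_of_lt hx', hxx]
    subst hxeq
    obtain ⟨h1, -⟩ := key x y h
    obtain ⟨h1', -⟩ := key x y' h'
    have hby : (b : ZMod p) * y = b * y' := by linear_combination h1' - h1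
    have hyz : (y : ZMod p) = y' := by
      exact mul_left_cancel₀ hb0 hby
    have : y = y' := by
      rw [← ZMod.val_cast_of_lt hy, ← ZMod.val_cast_of_lt hy', hyz]
    simp [this]
  have hcard : S.card ≤ q.roots.toFinset.card := by
    apply Finset.card_le_card_of_injOn (fun xy => (xy.1 : ZMod p))
    · rintro ⟨x, y⟩ h
      rw [Finset.mem_coe, Multiset.mem_toFinset, Polynomial.mem_roots hqne]
      exact hroot x y h
    · exact hinj
  calc S.card ≤ q.roots.toFinset.card := hcard
    _ ≤ Multiset.card q.roots := q.roots.toFinset_card_le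
    _ ≤ q.natDegree := q.card_roots' 
    _ = 2 := hdeg
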